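/- Let R = A[z;σ] with A = F[x]/(x^n−1), char(F) ∤ n. A submodule C ⊆ F[z]^n is σ-cyclic and delay-free if and only if the corresponding left ideal J = p(C) in R is a principal left ideal generated by some g ∈ R whose support equals the support of its z-free term g_0, i.e., e_k g ≠ 0 ⟺ e_k g_0 ≠ 0 for all primitive idempotents e_k of A. In particular every delay-free left ideal of R is a principal left ideal. -/

import Mathlib

set_option linter.unusedSectionVars false
set_option linter.unusedVariables false
set_option maxHeartbeats 1000000


open Polynomial

/-- A = F[x]/(x^n − 1). -/
abbrev Amod (F : Type) [Field F] (n : ℕ) : Type :=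
  Polynomial F ⧸ (Ideal.span {Polynomial.X ^ n - 1} : Ideal (Polynomial F))

/-- the class of x in A. -/
noncomputable def xbar (F : Type) [Field F] (n : ℕ) : Amod F n :=
  Ideal.Quotient.mk _ Polynomial.X

/-- The skew multiplication of A[z;σ]: a*z = z*σ(a). -/
noncomputable def skewMul {F A : Type*} [CommRing F] [CommRing A] [Algebra F A]
    (σ : A ≃ₐ[F] A) (g h : Polynomial A) : Polynomial A :=
  ∑ ν ∈ g.support, ∑ μ ∈ h.support,
    Polynomial.monomial (ν + μ) ((σ ^ μ) (g.coeff ν) * h.coeff μ)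

/-- The coefficientwise identification p : F[z]^n → A[z]. -/
noncomputable def pId (F : Type) [Field F] (n : ℕ) (v : Fin n → Polynomial F) :
    Polynomial (Amod F n) :=
  ∑ i : Fin n, Polynomial.C (xbar F n ^ (i : ℕ)) * (v i).map (algebraMap F (Amod F n))

/-- primitive idempotent: a nonzero idempotent which is not a sum of two nonzero
orthogonal idempotents. -/
def IsPrimIdem {A : Type*} [CommRing A] (e : A) : Prop :=
  e * e = e ∧ e ≠ 0 ∧
    ¬ ∃ a b : A, a * a = a ∧ b * b = b ∧ a * b = 0 ∧ a ≠ 0 ∧ b ≠ 0 ∧ e = a + b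



section SM
variable {F A : Type*} [CommRing F] [CommRing A] [Algebra F A] (σ : A ≃ₐ[F] A)

theorem skewMul_coeff (g h : Polynomial A) (k : ℕ) :
    (skewMul σ g h).coeff k =
      ∑ x ∈ Finset.HasAntidiagonal.antidiagonal k, (σ ^ x.2) (g.coeff x.1) * h.coeff x.2 := by
  unfold skewMul
  rw [Polynomial.finset_sum_coeff]
  simp only [Polynomial.finset_sum_coeff, Polynomial.coeff_monomial]
  rw [← Finset.sum_product', ← Finset.sum_filter]
  apply Finset.sum_subset
  · intro x hx
    rw [Finset.HasAntidiagonal.mem_antidiagonal]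
    exact (Finset.mem_filter.mp hx).2
  · intro x hx hx2
    have : x.1 ∉ g.support ∨ x.2 ∉ h.support := by
      by_contra hc
      push_neg at hc
      exact hx2 (Finset.mem_filter.mpr ⟨Finset.mem_product.mpr hc, Finset.HasAntidiagonal.mem_antidiagonal.mp hx⟩)
    rcases this with hc | hc
    · rw [Polynomial.notMem_support_iff] at hc; rw [hc, map_zero, zero_mul]
    · rw [Polynomial.notMem_support_iff] at hc; rw [hc, mul_zero]


theorem skewMul_add_left (g g' h : Polynomial A) :
    skewMul σ (g + g') h = skewMul σ g h + skewMul σ g' h := by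
  ext k
  simp only [skewMul_coeff, Polynomial.coeff_add, ← Finset.sum_add_distrib]
  exact Finset.sum_congr rfl fun x _ => by rw [map_add, add_mul]

theorem skewMul_add_right (g h h' : Polynomial A) :
    skewMul σ g (h + h') = skewMul σ g h + skewMul σ g h' := by
  ext k
  simp only [skewMul_coeff, Polynomial.coeff_add, ← Finset.sum_add_distrib]
  exact Finset.sum_congr rfl fun x _ => by rw [mul_add]

@[simp] theorem skewMul_zero_left (h : Polynomial A) : skewMul σ 0 h = 0 := by
  ext k; simp [skewMul_coeff]

@[simp] theorem skewMul_zero_right (g : Polynomial A) : skewMul σ g 0 = 0 := by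
  ext k; simp [skewMul_coeff]

theorem skewMul_neg_left (g h : Polynomial A) : skewMul σ (-g) h = -(skewMul σ g h) := by
  ext k
  simp only [skewMul_coeff, Polynomial.coeff_neg, ← Finset.sum_neg_distrib]
  exact Finset.sum_congr rfl fun x _ => by rw [map_neg, neg_mul]

theorem skewMul_monomial_monomial (a b : ℕ) (x y : A) :
    skewMul σ (Polynomial.monomial a x) (Polynomial.monomial b y)
      = Polynomial.monomial (a + b) ((σ ^ b) x * y) := by
  ext k
  rw [skewMul_coeff, Polynomial.coeff_monomial]
  by_cases hk : a + b = k
  · rw [if_pos hk, Finset.sum_eq_single (a, b)]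
    · simp
    · intro x' hx' hne
      simp only [Polynomial.coeff_monomial]
      by_cases h1 : a = x'.1
      · have h2 : ¬ b = x'.2 := fun h2 => hne (Prod.ext h1.symm h2.symm)
        rw [if_neg h2, mul_zero]
      · rw [if_neg h1, map_zero, zero_mul]
    · intro hmem; exact absurd (Finset.HasAntidiagonal.mem_antidiagonal.mpr hk) hmem
  · rw [if_neg hk]
    apply Finset.sum_eq_zero
    intro x' hx'
    have hs := Finset.HasAntidiagonal.mem_antidiagonal.mp hx'
    simp only [Polynomial.coeff_monomial]
    by_cases h1 : a = x'.1
    · have h2 : ¬ b = x'.2 := fun h2 => hk (by rw [h1, h2, hs])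
      rw [if_neg h2, mul_zero]
    · rw [if_neg h1, map_zero, zero_mul]

theorem skewMul_assoc (f g h : Polynomial A) :
    skewMul σ f (skewMul σ g h) = skewMul σ (skewMul σ f g) h := by
  induction f using Polynomial.induction_on' with
  | add p q hp hq => rw [skewMul_add_left, skewMul_add_left, hp, hq, skewMul_add_left]
  | monomial a x =>
    induction g using Polynomial.induction_on' with
    | add p q hp hq =>
      rw [skewMul_add_left σ p q h, skewMul_add_right, hp, hq, skewMul_add_right σ _ p q,
        skewMul_add_left]
    | monomial b y =>
      induction h using Polynomial.induction_on' with
      | add p q hp hq =>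
        rw [skewMul_add_right, skewMul_add_right, hp, hq, skewMul_add_right]
      | monomial c z =>
        rw [skewMul_monomial_monomial, skewMul_monomial_monomial,
          skewMul_monomial_monomial, skewMul_monomial_monomial, add_assoc]
        congr 1
        rw [map_mul, ← mul_assoc]
        congr 2
        rw [← AlgEquiv.mul_apply, ← pow_add, add_comm b c]

theorem skewMul_C_left_coeff (c : A) (h : Polynomial A) (k : ℕ) :
    (skewMul σ (Polynomial.C c) h).coeff k = (σ ^ k) c * h.coeff k := by
  rw [skewMul_coeff]
  rw [Finset.sum_eq_single (0, k)]
  · simp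
  · intro x hx hne
    have hs := Finset.HasAntidiagonal.mem_antidiagonal.mp hx
    have h1 : x.1 ≠ 0 := by
      intro h1
      exact hne (Prod.ext h1 (by omega))
    rw [Polynomial.coeff_C, if_neg h1, map_zero, zero_mul]
  · intro hmem
    exact absurd (Finset.HasAntidiagonal.mem_antidiagonal.mpr (by omega)) hmem

theorem skewMul_one_left (h : Polynomial A) : skewMul σ 1 h = h := by
  ext k
  rw [← Polynomial.C_1, skewMul_C_left_coeff, map_one, one_mul]

theorem skewMul_X_pow_left (d : ℕ) (h : Polynomial A) :
    skewMul σ (Polynomial.X ^ d) h = Polynomial.X ^ d * h := by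
  ext k
  rw [skewMul_coeff, Polynomial.coeff_mul]
  apply Finset.sum_congr rfl
  intro x hx
  simp only [Polynomial.coeff_X_pow]
  by_cases hd : x.1 = d
  · rw [if_pos hd, map_one]
  · rw [if_neg hd, map_zero]

theorem skewMul_X_left (h : Polynomial A) : skewMul σ Polynomial.X h = Polynomial.X * h := by
  have := skewMul_X_pow_left σ 1 h
  rwa [pow_one] at this

theorem skewMul_sum_right {ι : Type*} (s : Finset ι) (u : Polynomial A) (f : ι → Polynomial A) :
    skewMul σ u (∑ i ∈ s, f i) = ∑ i ∈ s, skewMul σ u (f i) := by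
  classical
  induction s using Finset.induction_on with
  | empty => simp
  | insert _ _ hni ih =>
    rw [Finset.sum_insert hni, Finset.sum_insert hni, skewMul_add_right, ih]

theorem skewMul_sum_left {ι : Type*} (s : Finset ι) (f : ι → Polynomial A) (g : Polynomial A) :
    skewMul σ (∑ i ∈ s, f i) g = ∑ i ∈ s, skewMul σ (f i) g := by
  classical
  induction s using Finset.induction_on with
  | empty => simp
  | insert _ _ hni ih =>
    rw [Finset.sum_insert hni, Finset.sum_insert hni, skewMul_add_left, ih]

theorem skewMul_map_left (p : Polynomial F) (h : Polynomial A) :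
    skewMul σ (p.map (algebraMap F A)) h = p.map (algebraMap F A) * h := by
  ext k
  rw [skewMul_coeff, Polynomial.coeff_mul]
  apply Finset.sum_congr rfl
  intro x hx
  rw [Polynomial.coeff_map, AlgEquiv.commutes]

end SM


section Idem
variable {A : Type*} [CommRing A] [Finite A] [IsReduced A]

theorem exists_idem_of (x : A) : ∃ e c : A, e * e = e ∧ e = c * x ∧ e * x = x := by
  classical
  obtain ⟨i, j, hne, hij⟩ := Finite.exists_ne_map_eq_of_infinite (fun i : ℕ => x ^ (i + 1))
  wlog hlt : i < j generalizing i j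
  · exact this j i hne.symm hij.symm (by omega)
  have hij : x ^ (i + 1) = x ^ (j + 1) := hij
  set l := j - i with hl
  have hl1 : 1 ≤ l := by omega
  have step : ∀ m, i + 1 ≤ m → x ^ m = x ^ (m + l) := by
    intro m hm
    have : x ^ m = x ^ (i + 1) * x ^ (m - (i + 1)) := by
      rw [← pow_add]; congr 1; omega
    rw [this, hij, ← pow_add]
    congr 1; omega
  have iter : ∀ s m, i + 1 ≤ m → x ^ m = x ^ (m + s * l) := by
    intro s
    induction s with
    | zero => intro m _; simp
    | succ t ih =>
      intro m hm
      rw [ih m hm, step (m + t * l) (by omega)]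
      congr 1; ring
  set k := (i + 1) * l with hk
  have hk1 : 1 ≤ k := Nat.mul_pos (Nat.succ_pos i) hl1
  have hik : i + 1 ≤ k := Nat.le_mul_of_pos_right _ hl1
  have hkk : x ^ k * x ^ k = x ^ k := by
    rw [← pow_add, show k + k = k + (i + 1) * l from by rw [← hk], ← iter (i+1) k hik]
  refine ⟨x ^ k, x ^ (k - 1), hkk, by rw [← pow_succ]; congr 1; omega, ?_⟩
  have h1e : (1 - x ^ k) * (1 - x ^ k) = 1 - x ^ k := by linear_combination hkk
  have h1ek : ∀ s, 1 ≤ s → (1 - x ^ k) ^ s = 1 - x ^ k := by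
    intro s hs
    induction s with
    | zero => omega
    | succ t ih =>
      rcases Nat.eq_or_lt_of_le hs with h | h
      · rw [← h, pow_one]
      · rw [pow_succ, ih (by omega), h1e]
  have hnil : ((1 - x ^ k) * x) ^ k = 0 := by
    rw [mul_pow, h1ek k hk1, sub_mul, one_mul, ← pow_add,
      show k + k = k + (i + 1) * l from by rw [← hk], ← iter (i+1) k hik, sub_self]
  have h0 : (1 - x ^ k) * x = 0 := IsReduced.eq_zero _ ⟨k, hnil⟩
  linear_combination -h0

theorem idem_eq_of_le {e : A} (he : IsPrimIdem e) (x : A) (hx : x * x = x) (hxe : x * e = x)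
    (hx0 : x ≠ 0) : e = x := by
  by_contra hne
  exact he.2.2 ⟨x, e - x, hx, by linear_combination he.1 - 2 * hxe + hx,
    by linear_combination hxe - hx, hx0, sub_ne_zero_of_ne hne, by ring⟩

theorem prim_inv {e : A} (he : IsPrimIdem e) (y : A) (hy : e * y = y) (hy0 : y ≠ 0) :
    ∃ c, c * y = e ∧ e * c = c := by
  obtain ⟨e₁, c₁, h11, h12, h13⟩ := exists_idem_of y
  have he1e : e₁ * e = e₁ := by rw [h12, mul_assoc, mul_comm y e, hy, ← h12]
  have he10 : e₁ ≠ 0 := fun h => hy0 (by rw [← h13, h, zero_mul])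
  have heq := idem_eq_of_le he e₁ h11 he1e he10
  refine ⟨e * c₁, ?_, by rw [← mul_assoc, he.1]⟩
  rw [mul_assoc, ← h12, ← heq, he.1]

omit [Finite A] [IsReduced A] in
theorem IsPrimIdem.map {B : Type*} [CommRing B] (f : A ≃+* B) {e : A} (he : IsPrimIdem e) :
    IsPrimIdem (f e) := by
  refine ⟨by rw [← map_mul, he.1], fun h => he.2.1 (f.injective (by rw [h, map_zero])), ?_⟩
  rintro ⟨a, b, ha, hb, hab, ha0, hb0, hsum⟩
  refine he.2.2 ⟨f.symm a, f.symm b, ?_, ?_, ?_, ?_, ?_, ?_⟩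
  · rw [← map_mul, ha]
  · rw [← map_mul, hb]
  · rw [← map_mul, hab, map_zero]
  · exact fun h => ha0 (by simpa using congrArg f h)
  · exact fun h => hb0 (by simpa using congrArg f h)
  · apply f.injective; rw [map_add]; simpa using hsum

theorem exists_prim_partition :
    ∃ Es : Finset A, (∀ e ∈ Es, IsPrimIdem e) ∧
      (∀ e ∈ Es, ∀ e' ∈ Es, e ≠ e' → e * e' = 0) ∧ ∑ e ∈ Es, e = 1 := by
  classical
  suffices h : ∀ (N : ℕ) (f : A), f * f = f → ({x : A | x * f = x}).ncard ≤ N →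
      ∃ Es : Finset A, (∀ e ∈ Es, IsPrimIdem e) ∧
        (∀ e ∈ Es, ∀ e' ∈ Es, e ≠ e' → e * e' = 0) ∧ (∀ e ∈ Es, e * f = e) ∧
        ∑ e ∈ Es, e = f by
    obtain ⟨Es, h1, h2, _, h4⟩ := h ({x : A | x * (1:A) = x}).ncard 1 (one_mul 1) le_rfl
    exact ⟨Es, h1, h2, h4⟩
  intro N
  induction N with
  | zero =>
    intro f hf hcard
    have hmem : f ∈ {x : A | x * f = x} := hf
    have hfin : ({x : A | x * f = x}).Finite := Set.toFinite _
    have := (Set.ncard_pos (hs := hfin)).mpr ⟨f, hmem⟩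
    omega
  | succ N ih =>
    intro f hf hcard
    by_cases hf0 : f = 0
    · exact ⟨∅, by simp, by simp, by simp, by simp [hf0]⟩
    by_cases hprim : IsPrimIdem f
    · exact ⟨{f}, by simpa using hprim, by simp, by simp [hf], by simp⟩
    have : ∃ a b : A, a * a = a ∧ b * b = b ∧ a * b = 0 ∧ a ≠ 0 ∧ b ≠ 0 ∧ f = a + b := by
      by_contra hc
      exact hprim ⟨hf, hf0, hc⟩
    obtain ⟨a, b, ha, hb, hab, ha0, hb0, hsum⟩ := this
    have haf : a * f = a := by rw [hsum, mul_add, ha, hab, add_zero]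
    have hbf : b * f = b := by rw [hsum, mul_add, hb, mul_comm b a, hab, zero_add]
    have hkey : ∀ y : A, y * y = y → y * f = y → y ≠ 0 →
        {x : A | x * y = x} ⊂ {x : A | x * f = x} → ∃ Es : Finset A,
        (∀ e ∈ Es, IsPrimIdem e) ∧ (∀ e ∈ Es, ∀ e' ∈ Es, e ≠ e' → e * e' = 0) ∧
        (∀ e ∈ Es, e * y = e) ∧ ∑ e ∈ Es, e = y := by
      intro y hy hyf hy0 hsub
      apply ih y hy
      have := Set.ncard_lt_ncard hsub (Set.toFinite _)
      omega
    have hsuba : {x : A | x * a = x} ⊂ {x : A | x * f = x} := by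
      constructor
      · intro x hx
        have hx' : x * a = x := hx
        show x * f = x
        rw [← hx', mul_assoc, haf]
      · intro hge
        have hbmem : b ∈ {x : A | x * f = x} := hbf
        have hba : b * a = b := hge hbmem
        rw [mul_comm b a, hab] at hba
        exact hb0 hba.symm
    have hsubb : {x : A | x * b = x} ⊂ {x : A | x * f = x} := by
      constructor
      · intro x hx
        have hx' : x * b = x := hx
        show x * f = x
        rw [← hx', mul_assoc, hbf]
      · intro hge
        have hamem : a ∈ {x : A | x * f = x} := haf
        have hba : a * b = a := hge hamem
        rw [hab] at hba
        exact ha0 hba.symm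
    obtain ⟨Ea, ha1, ha2, ha3, ha4⟩ := hkey a ha haf ha0 hsuba
    obtain ⟨Eb, hb1, hb2, hb3, hb4⟩ := hkey b hb hbf hb0 hsubb
    have hdisj : Disjoint Ea Eb := by
      rw [Finset.disjoint_left]
      intro e hea heb
      have h1 : e * a = e := ha3 e hea
      have h2 : e * b = e := hb3 e heb
      have : e = 0 := by
        calc e = e * a := h1.symm
        _ = (e * b) * a := by rw [h2]
        _ = (e * a) * b := by ring
        _ = e * b := by rw [h1]
        _ = (e * a) * b := by rw [h1]
        _ = e * (a * b) := by ring
        _ = 0 := by rw [hab, mul_zero]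
      exact (ha1 e hea).2.1 this
    refine ⟨Ea ∪ Eb, ?_, ?_, ?_, ?_⟩
    · intro e he
      rcases Finset.mem_union.mp he with h | h
      · exact ha1 e h
      · exact hb1 e h
    · intro e he e' he' hne
      rcases Finset.mem_union.mp he with h | h <;> rcases Finset.mem_union.mp he' with h' | h'
      · exact ha2 e h e' h' hne
      · calc e * e' = (e * a) * (e' * b) := by rw [ha3 e h, hb3 e' h']
          _ = (e * e') * (a * b) := by ring
          _ = 0 := by rw [hab, mul_zero]
      · calc e * e' = (e * b) * (e' * a) := by rw [hb3 e h, ha3 e' h']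
          _ = (e * e') * (a * b) := by ring
          _ = 0 := by rw [hab, mul_zero]
      · exact hb2 e h e' h' hne
    · intro e he
      rcases Finset.mem_union.mp he with h | h
      · rw [hsum, mul_add]
        have h2 : e * b = 0 := by
          calc e * b = (e * a) * b := by rw [ha3 e h]
            _ = e * (a * b) := by ring
            _ = 0 := by rw [hab, mul_zero]
        rw [ha3 e h, h2, add_zero]
      · rw [hsum, mul_add]
        have h2 : e * a = 0 := by
          calc e * a = (e * b) * a := by rw [hb3 e h]
            _ = e * (a * b) := by ring
            _ = 0 := by rw [hab, mul_zero]
        rw [hb3 e h, h2, zero_add]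
    · rw [Finset.sum_union hdisj, ha4, hb4, hsum]

theorem prim_mem_partition {Es : Finset A} (h1 : ∀ e ∈ Es, IsPrimIdem e)
    (h3 : ∑ e ∈ Es, e = 1) {e : A} (he : IsPrimIdem e) : e ∈ Es := by
  classical
  have hsum : ∑ e' ∈ Es, e * e' = e := by rw [← Finset.mul_sum, h3, mul_one]
  have : ∃ e' ∈ Es, e * e' ≠ 0 := by
    by_contra hc
    push_neg at hc
    exact he.2.1 (by rw [← hsum, Finset.sum_eq_zero hc])
  obtain ⟨e', he', hne⟩ := this
  have hee' : (e * e') * (e * e') = e * e' := by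
    calc (e * e') * (e * e') = (e * e) * (e' * e') := by ring
      _ = e * e' := by rw [he.1, (h1 e' he').1]
  have h5 : e = e * e' := idem_eq_of_le he (e * e') hee' (by rw [mul_comm, ← mul_assoc, he.1]) hne
  have h6 : e' = e * e' := idem_eq_of_le (h1 e' he') (e * e') hee'
    (by rw [mul_assoc, (h1 e' he').1]) hne
  rw [show e = e' from h5.trans h6.symm]
  exact he'

end Idem

section AmodSec
variable (F : Type) [Field F] (n : ℕ)

theorem xpow_sub_one_natDegree : (X ^ n - 1 : Polynomial F).natDegree = n := by
  rw [← Polynomial.C_1, Polynomial.natDegree_X_pow_sub_C]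

theorem xpow_sub_one_ne_zero (hn : 0 < n) : (X ^ n - 1 : Polynomial F) ≠ 0 := by
  intro h
  have := xpow_sub_one_natDegree F n
  rw [h] at this
  simp at this
  omega

theorem amod_nontrivial (hn : 0 < n) : Nontrivial (Amod F n) := by
  apply Ideal.Quotient.nontrivial_iff.mpr
  rw [Ne, Ideal.span_singleton_eq_top]
  intro hu
  have := Polynomial.natDegree_eq_zero_of_isUnit hu
  rw [xpow_sub_one_natDegree] at this
  omega

noncomputable def amodBasis (hn : 0 < n) : Module.Basis (Fin n) F (Amod F n) :=
  ((AdjoinRoot.powerBasis (xpow_sub_one_ne_zero F n hn)).basis).reindex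
    (finCongr (by rw [AdjoinRoot.powerBasis_dim, xpow_sub_one_natDegree]))

theorem amodBasis_apply (hn : 0 < n) (i : Fin n) :
    amodBasis F n hn i = xbar F n ^ (i : ℕ) := by
  rw [show amodBasis F n hn i
      = ((AdjoinRoot.powerBasis (xpow_sub_one_ne_zero F n hn)).basis).reindex
        (finCongr (by rw [AdjoinRoot.powerBasis_dim, xpow_sub_one_natDegree])) i from rfl,
    Module.Basis.reindex_apply, PowerBasis.coe_basis, AdjoinRoot.powerBasis_gen,
    finCongr_symm, finCongr_apply]
  show AdjoinRoot.root (X ^ n - 1) ^ ((Fin.cast _ i : Fin _) : ℕ) = xbar F n ^ (i : ℕ)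
  rw [Fin.coe_cast]
  rfl


theorem amod_isReduced [Fintype F] (hchar : ¬ ringChar F ∣ n) : IsReduced (Amod F n) := by
  rw [← Ideal.isRadical_iff_quotient_reduced]
  have hcast : (n : F) ≠ 0 := by
    intro h
    exact hchar ((CharP.cast_eq_zero_iff F (ringChar F) n).mp h)
  have hsep : (X ^ n - C (1 : F)).Separable :=
    Polynomial.separable_X_pow_sub_C 1 hcast one_ne_zero
  have hsq : Squarefree (X ^ n - 1 : Polynomial F) := by
    rw [← Polynomial.C_1]
    exact hsep.squarefree
  exact isRadical_iff_span_singleton.mp hsq.isRadical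

theorem pId_coeff (v : Fin n → Polynomial F) (k : ℕ) :
    (pId F n v).coeff k = ∑ i : Fin n, ((v i).coeff k) • (xbar F n ^ (i : ℕ)) := by
  unfold pId
  rw [Polynomial.finset_sum_coeff]
  simp only [Polynomial.coeff_C_mul, Polynomial.coeff_map]
  exact Finset.sum_congr rfl fun i _ => (mul_comm _ _).trans (Algebra.smul_def _ _).symm

theorem pId_add (v w : Fin n → Polynomial F) :
    pId F n (v + w) = pId F n v + pId F n w := by
  unfold pId
  rw [← Finset.sum_add_distrib]
  apply Finset.sum_congr rfl
  intro i _
  rw [Pi.add_apply, Polynomial.map_add, mul_add]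

theorem pId_zero : pId F n 0 = 0 := by
  unfold pId
  apply Finset.sum_eq_zero
  intro i _
  simp

theorem pId_smul (p : Polynomial F) (v : Fin n → Polynomial F) :
    pId F n (p • v) = (p.map (algebraMap F (Amod F n))) * pId F n v := by
  unfold pId
  rw [Finset.mul_sum]
  apply Finset.sum_congr rfl
  intro i _
  rw [Pi.smul_apply, smul_eq_mul, Polynomial.map_mul]
  ring

theorem pId_injective (hn : 0 < n) : Function.Injective (pId F n) := by
  intro v w h
  funext i
  ext k
  have hc := congrArg (fun q => Polynomial.coeff q k) h
  simp only [pId_coeff] at hc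
  have h1 : ∑ j : Fin n, ((v j).coeff k - (w j).coeff k) • (amodBasis F n hn j) = 0 := by
    simp only [sub_smul, Finset.sum_sub_distrib, amodBasis_apply]
    rw [hc, sub_self]
  have h2 := Fintype.linearIndependent_iff.mp (amodBasis F n hn).linearIndependent _ h1 i
  exact sub_eq_zero.mp h2

theorem pId_surjective (hn : 0 < n) : Function.Surjective (pId F n) := by
  classical
  intro h
  refine ⟨fun i => ∑ k ∈ h.support, Polynomial.monomial k
    ((amodBasis F n hn).repr (h.coeff k) i), ?_⟩
  ext k
  rw [pId_coeff]
  have hco : ∀ i : Fin n, (∑ k' ∈ h.support, Polynomial.monomial k'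
      ((amodBasis F n hn).repr (h.coeff k') i)).coeff k
      = if k ∈ h.support then (amodBasis F n hn).repr (h.coeff k) i else 0 := by
    intro i
    rw [Polynomial.finset_sum_coeff]
    simp only [Polynomial.coeff_monomial]
    exact Finset.sum_ite_eq' h.support k _
  simp only [hco]
  by_cases hk : k ∈ h.support
  · simp only [if_pos hk]
    have := (amodBasis F n hn).sum_repr (h.coeff k)
    simp only [amodBasis_apply] at this
    exact this
  · simp only [if_neg hk]
    rw [Polynomial.notMem_support_iff.mp hk]
    simp

theorem amod_finite (hn : 0 < n) [Fintype F] : Finite (Amod F n) := by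
  have b := amodBasis F n hn
  exact Finite.of_equiv _ b.equivFun.symm.toEquiv

end AmodSec

section PureSec
variable {F A : Type*} [CommRing F] [CommRing A] [Algebra F A] (σ : A ≃ₐ[F] A)

/-- `h` is a pure element for the idempotent thread `e`. -/
def SPure (e : A) (h : Polynomial A) : Prop :=
  ∀ ν : ℕ, (σ ^ ν) e * h.coeff ν = h.coeff ν

theorem spure_zero (e : A) : SPure σ e 0 := by
  intro ν; simp

theorem spure_sub {e : A} {h h' : Polynomial A} (h1 : SPure σ e h) (h2 : SPure σ e h') :
    SPure σ e (h - h') := by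
  intro ν
  rw [Polynomial.coeff_sub, mul_sub, h1 ν, h2 ν]

theorem spure_C_mul (e : A) (he : e * e = e) (h : Polynomial A) :
    SPure σ e (skewMul σ (Polynomial.C e) h) := by
  intro ν
  rw [skewMul_C_left_coeff, ← mul_assoc, ← map_mul, he]

theorem spure_C_mul_self {e : A} {h : Polynomial A} (hp : SPure σ e h) :
    skewMul σ (Polynomial.C e) h = h := by
  ext ν
  rw [skewMul_C_left_coeff]
  exact hp ν

theorem spure_smul {e c : A} (hc : e * c = c) {h : Polynomial A} (hp : SPure σ e h) :
    SPure σ e (skewMul σ (Polynomial.C c) h) := by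
  intro ν
  rw [skewMul_C_left_coeff, ← mul_assoc, ← map_mul, hc]

theorem spure_orth {e e' : A} (horth : e' * e = 0) {h : Polynomial A} (hp : SPure σ e h) :
    skewMul σ (Polynomial.C e') h = 0 := by
  ext ν
  rw [skewMul_C_left_coeff, Polynomial.coeff_zero, ← hp ν, ← mul_assoc, ← map_mul, horth,
    map_zero, zero_mul]

theorem spure_coeff_mem {e : A} {h : Polynomial A} (hp : SPure σ e h) :
    e * h.coeff 0 = h.coeff 0 := by
  have := hp 0
  rwa [pow_zero, AlgEquiv.one_apply] at this

theorem spure_sum_threads {Es : Finset A} (hsum : ∑ e ∈ Es, e = 1) (h : Polynomial A) :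
    ∑ e ∈ Es, skewMul σ (Polynomial.C e) h = h := by
  ext ν
  rw [Polynomial.finset_sum_coeff]
  simp only [skewMul_C_left_coeff]
  rw [← Finset.sum_mul, ← map_sum, hsum, map_one, one_mul]

theorem spure_shift {e : A} {h q : Polynomial A} (hp : SPure σ e h) (o : ℕ)
    (hq : h = Polynomial.X ^ o * q) : SPure σ ((σ ^ o) e) q := by
  intro ν
  have hcoeff : q.coeff ν = h.coeff (ν + o) := by
    rw [hq, Polynomial.coeff_X_pow_mul]
  rw [hcoeff]
  conv_rhs => rw [← hp (ν + o), pow_add, AlgEquiv.mul_apply]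

end PureSec

section SpanSec
variable {F A : Type*} [CommRing F] [CommRing A] [Algebra F A] (σ : A ≃ₐ[F] A)

/-- the left `R`-span of a finite family. -/
def SkewSpan {ι : Type*} [Fintype ι] (l : ι → Polynomial A) : Set (Polynomial A) :=
  {h | ∃ u : ι → Polynomial A, h = ∑ i, skewMul σ (u i) (l i)}

theorem mem_skewSpan_single {ι : Type*} [Fintype ι] [DecidableEq ι] (l : ι → Polynomial A)
    (i : ι) : l i ∈ SkewSpan σ l := by
  refine ⟨fun k => if k = i then 1 else 0, Eq.symm ?_⟩
  calc (∑ k, skewMul σ ((fun k => if k = i then (1 : Polynomial A) else 0) k) (l k))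
      = ∑ k, (if k = i then l k else 0) := Finset.sum_congr rfl (fun k _ => by
        by_cases hk : k = i
        · simp only [hk, if_pos trivial, eq_self_iff_true]
          rw [skewMul_one_left]
        · simp only [if_neg hk, skewMul_zero_left])
    _ = l i := by rw [Finset.sum_ite_eq' Finset.univ i l, if_pos (Finset.mem_univ i)]

theorem skewSpan_zero_mem {ι : Type*} [Fintype ι] (l : ι → Polynomial A) :
    (0 : Polynomial A) ∈ SkewSpan σ l :=
  ⟨0, by simp⟩

theorem skewSpan_add {ι : Type*} [Fintype ι] (l : ι → Polynomial A) {a b : Polynomial A}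
    (ha : a ∈ SkewSpan σ l) (hb : b ∈ SkewSpan σ l) : a + b ∈ SkewSpan σ l := by
  obtain ⟨u, hu⟩ := ha
  obtain ⟨v, hv⟩ := hb
  refine ⟨fun i => u i + v i, ?_⟩
  rw [hu, hv, ← Finset.sum_add_distrib]
  exact Finset.sum_congr rfl fun i _ => (skewMul_add_left σ _ _ _).symm

theorem skewSpan_mul {ι : Type*} [Fintype ι] (l : ι → Polynomial A) (f : Polynomial A)
    {a : Polynomial A} (ha : a ∈ SkewSpan σ l) : skewMul σ f a ∈ SkewSpan σ l := by
  obtain ⟨u, hu⟩ := ha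
  refine ⟨fun i => skewMul σ f (u i), ?_⟩
  rw [hu, skewMul_sum_right]
  exact Finset.sum_congr rfl fun i _ => skewMul_assoc σ f (u i) (l i)

theorem skewSpan_sum {ι : Type*} [Fintype ι] (l : ι → Polynomial A) {κ : Type*} (s : Finset κ)
    (f : κ → Polynomial A) (hf : ∀ k ∈ s, f k ∈ SkewSpan σ l) :
    ∑ k ∈ s, f k ∈ SkewSpan σ l :=
  Finset.sum_induction f (· ∈ SkewSpan σ l) (fun _ _ => skewSpan_add σ l)
    (skewSpan_zero_mem σ l) hf

theorem skewSpan_mono {ι ι' : Type*} [Fintype ι] [Fintype ι'] (l : ι → Polynomial A)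
    (l' : ι' → Polynomial A) (hl : ∀ i, l i ∈ SkewSpan σ l') :
    SkewSpan σ l ⊆ SkewSpan σ l' := by
  rintro h ⟨u, hu⟩
  rw [hu]
  exact skewSpan_sum σ l' _ _ fun i _ => skewSpan_mul σ l' (u i) (hl i)

end SpanSec

section NormSec
variable {F A : Type*} [CommRing F] [CommRing A] [Algebra F A] (σ : A ≃ₐ[F] A)

theorem natDegree_X_pow_mul_eq [Nontrivial A] {q : Polynomial A} (hq : q ≠ 0) (o : ℕ) :
    (Polynomial.X ^ o * q).natDegree = o + q.natDegree := by
  apply le_antisymm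
  · calc (Polynomial.X ^ o * q).natDegree
        ≤ (Polynomial.X ^ o : Polynomial A).natDegree + q.natDegree :=
          Polynomial.natDegree_mul_le
      _ = o + q.natDegree := by rw [Polynomial.natDegree_X_pow]
  · apply Polynomial.le_natDegree_of_ne_zero
    rw [add_comm, Polynomial.coeff_X_pow_mul]
    exact fun hh => hq (Polynomial.leadingCoeff_eq_zero.mp hh)

theorem delay_pow (J : Set (Polynomial A))
    (hdelay : ∀ a : Polynomial A, Polynomial.X * a ∈ J → a ∈ J) (o : ℕ) :
    ∀ a : Polynomial A, Polynomial.X ^ o * a ∈ J → a ∈ J := by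
  induction o with
  | zero => intro a ha; rwa [pow_zero, one_mul] at ha
  | succ o ih =>
    intro a ha
    apply hdelay
    apply ih
    have hrw : Polynomial.X ^ (o + 1) * a = Polynomial.X ^ o * (Polynomial.X * a) := by ring
    rwa [hrw] at ha

theorem norm_lemma [Nontrivial A] (J : Set (Polynomial A))
    (hdelay : ∀ a : Polynomial A, Polynomial.X * a ∈ J → a ∈ J)
    {h : Polynomial A} (hJ : h ∈ J) {e : A} (he : IsPrimIdem e) (hp : SPure σ e h) :
    ∃ (h' : Polynomial A) (e' : A) (o : ℕ), h' ∈ J ∧ IsPrimIdem e' ∧ SPure σ e' h' ∧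
      (h' ≠ 0 → h'.coeff 0 ≠ 0) ∧ h = Polynomial.X ^ o * h' ∧
      (h = 0 → h' = 0) ∧ (h ≠ 0 → h.natDegree = o + h'.natDegree) ∧
      (h.coeff 0 = 0 → h ≠ 0 → 1 ≤ o) := by
  by_cases h0 : h = 0
  · refine ⟨0, e, 0, h0 ▸ hJ, he, spure_zero σ e, fun hh => absurd rfl hh, by simp [h0],
      fun _ => rfl, fun hne => absurd h0 hne, fun _ hne => absurd h0 hne⟩
  · set o := h.natTrailingDegree with ho
    have hdvd : Polynomial.X ^ o ∣ h := Polynomial.X_pow_dvd_iff.mpr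
      (fun d hd => Polynomial.coeff_eq_zero_of_lt_natTrailingDegree hd)
    obtain ⟨q, hq⟩ := hdvd
    have hq0 : q ≠ 0 := fun hh => h0 (by rw [hq, hh, mul_zero])
    have hqco : q.coeff 0 = h.coeff o := by
      rw [hq]
      have := Polynomial.coeff_X_pow_mul q o 0
      rw [zero_add] at this
      exact this.symm
    have htc : h.coeff o ≠ 0 := by
      have : h.trailingCoeff ≠ 0 := fun hh => h0 (Polynomial.trailingCoeff_eq_zero.mp hh)
      rwa [Polynomial.trailingCoeff] at this
    refine ⟨q, (σ ^ o) e, o, delay_pow J hdelay o q (hq ▸ hJ), ?_, spure_shift σ hp o hq,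
      fun _ => by rw [hqco]; exact htc, hq, fun hh => absurd hh h0,
      fun _ => by rw [hq, natDegree_X_pow_mul_eq hq0], ?_⟩
    · exact IsPrimIdem.map (σ ^ o).toRingEquiv he
    · intro hc0 _
      rcases Nat.eq_zero_or_pos o with hzero | hpos
      · exfalso
        apply htc
        rw [hzero] at hqco ⊢
        exact hc0
      · exact hpos

end NormSec

section MLSec
variable {F A : Type*} [CommRing F] [CommRing A] [Algebra F A] [Finite A] [IsReduced A]
  [Nontrivial A] (σ : A ≃ₐ[F] A)

theorem skewMul_C_natDegree_le (c : A) (h : Polynomial A) :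
    (skewMul σ (Polynomial.C c) h).natDegree ≤ h.natDegree :=
  Polynomial.natDegree_le_iff_coeff_eq_zero.mpr fun N hN => by
    rw [skewMul_C_left_coeff, Polynomial.coeff_eq_zero_of_natDegree_lt hN, mul_zero]

theorem masterLemma (J : Set (Polynomial A))
    (h0J : (0 : Polynomial A) ∈ J)
    (haddJ : ∀ a ∈ J, ∀ b ∈ J, a + b ∈ J)
    (hmulJ : ∀ (f : Polynomial A), ∀ a ∈ J, skewMul σ f a ∈ J)
    (hdelay : ∀ a : Polynomial A, Polynomial.X * a ∈ J → a ∈ J)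
    (ι : Type) [Fintype ι] (l0 : ι → Polynomial A)
    (hl0J : ∀ i, l0 i ∈ J) (hl0span : J ⊆ SkewSpan σ l0) :
    ∃ g : Polynomial A, (∀ h : Polynomial A, h ∈ J ↔ ∃ u, h = skewMul σ u g) ∧
      (∀ e : A, IsPrimIdem e → (skewMul σ (Polynomial.C e) g ≠ 0 ↔ e * g.coeff 0 ≠ 0)) := by
  classical
  obtain ⟨Es, hEs1, hEs2, hEs3⟩ := exists_prim_partition (A := A)
  set ι₁ := ι × {e : A // e ∈ Es} with hι₁
  have hJsum : ∀ (f : ι₁ → Polynomial A), (∀ k, f k ∈ J) → (∑ k, f k) ∈ J := by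
    intro f hf
    exact Finset.sum_induction f (· ∈ J) (fun a b ha hb => haddJ a ha b hb) h0J
      (fun k _ => hf k)
  -- the invariant record
  have final : ∀ (l : ι₁ → Polynomial A) (efun : ι₁ → A),
      (∀ i, l i ∈ J) → (∀ i, IsPrimIdem (efun i)) → (∀ i, SPure σ (efun i) (l i)) →
      (∀ i, l i ≠ 0 → (l i).coeff 0 ≠ 0) → (J ⊆ SkewSpan σ l) →
      (∀ i j, i ≠ j → l i ≠ 0 → l j ≠ 0 → efun i ≠ efun j) →
      ∃ g : Polynomial A, (∀ h : Polynomial A, h ∈ J ↔ ∃ u, h = skewMul σ u g) ∧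
        (∀ e : A, IsPrimIdem e →
          (skewMul σ (Polynomial.C e) g ≠ 0 ↔ e * g.coeff 0 ≠ 0)) := by
    intro l efun inv1 inv2 inv3 inv4 inv5 nocol
    have hmemEs : ∀ i, efun i ∈ Es := fun i => prim_mem_partition hEs1 hEs3 (inv2 i)
    set g : Polynomial A := ∑ i, l i with hg
    have hgJ : g ∈ J := by rw [hg]; exact hJsum l inv1
    have horthkey : ∀ (e : A) (k : ι₁), e ∈ Es → efun k ≠ e →
        skewMul σ (Polynomial.C e) (l k) = 0 := by
      intro e k heEs hne
      exact spure_orth σ (hEs2 e heEs (efun k) (hmemEs k) (Ne.symm hne)) (inv3 k)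
    have key : ∀ i, l i ≠ 0 → skewMul σ (Polynomial.C (efun i)) g = l i := by
      intro i hi
      rw [hg, skewMul_sum_right, Finset.sum_eq_single i]
      · exact spure_C_mul_self σ (inv3 i)
      · intro k _ hk
        by_cases hk0 : l k = 0
        · rw [hk0, skewMul_zero_right]
        · exact horthkey (efun i) k (hmemEs i) (nocol k i hk hk0 hi)
      · intro hmem
        exact absurd (Finset.mem_univ i) hmem
    have key0 : ∀ (e : A), e ∈ Es → (∀ i, l i ≠ 0 → efun i ≠ e) →
        skewMul σ (Polynomial.C e) g = 0 := by
      intro e heEs hno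
      rw [hg, skewMul_sum_right]
      apply Finset.sum_eq_zero
      intro k _
      by_cases hk0 : l k = 0
      · rw [hk0, skewMul_zero_right]
      · exact horthkey e k heEs (hno k hk0)
    have gcoeff : ∀ (e : A), e ∈ Es → e * g.coeff 0 = ∑ k, e * (l k).coeff 0 := by
      intro e _
      rw [hg, Polynomial.finset_sum_coeff, Finset.mul_sum]
    have gcoeff0 : ∀ (e : A), e ∈ Es → (∀ i, l i ≠ 0 → efun i ≠ e) → e * g.coeff 0 = 0 := by
      intro e heEs hno
      rw [gcoeff e heEs]
      apply Finset.sum_eq_zero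
      intro k _
      by_cases hk0 : l k = 0
      · rw [hk0, Polynomial.coeff_zero, mul_zero]
      · rw [← spure_coeff_mem σ (inv3 k), ← mul_assoc,
          hEs2 e heEs (efun k) (hmemEs k) (Ne.symm (hno k hk0)), zero_mul]
    have gcoeffi : ∀ i, l i ≠ 0 → (efun i) * g.coeff 0 = (l i).coeff 0 := by
      intro i hi
      rw [gcoeff (efun i) (hmemEs i), Finset.sum_eq_single i]
      · exact spure_coeff_mem σ (inv3 i)
      · intro k _ hk
        by_cases hk0 : l k = 0
        · rw [hk0, Polynomial.coeff_zero, mul_zero]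
        · rw [← spure_coeff_mem σ (inv3 k), ← mul_assoc,
            hEs2 (efun i) (hmemEs i) (efun k) (hmemEs k) (Ne.symm (nocol k i hk hk0 hi)),
            zero_mul]
      · intro hmem
        exact absurd (Finset.mem_univ i) hmem
    refine ⟨g, ?_, ?_⟩
    · intro h
      constructor
      · intro hh
        obtain ⟨u, hu⟩ := inv5 hh
        refine ⟨∑ i ∈ Finset.univ.filter (fun i => l i ≠ 0),
          skewMul σ (u i) (Polynomial.C (efun i)), ?_⟩
        rw [skewMul_sum_left]
        have hterm : ∀ i ∈ Finset.univ.filter (fun i => l i ≠ 0),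
            skewMul σ (skewMul σ (u i) (Polynomial.C (efun i))) g = skewMul σ (u i) (l i) := by
          intro i hi
          have hi0 : l i ≠ 0 := (Finset.mem_filter.mp hi).2
          rw [← skewMul_assoc, key i hi0]
        rw [Finset.sum_congr rfl hterm]
        rw [hu]
        symm
        apply Finset.sum_subset (Finset.filter_subset _ _)
        intro k _ hk
        have : l k = 0 := by
          by_contra hc
          exact hk (Finset.mem_filter.mpr ⟨Finset.mem_univ k, hc⟩)
        rw [this, skewMul_zero_right]
      · rintro ⟨u, rfl⟩
        exact hmulJ u g hgJ
    · intro e he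
      have heEs : e ∈ Es := prim_mem_partition hEs1 hEs3 he
      by_cases hex : ∃ i, l i ≠ 0 ∧ efun i = e
      · obtain ⟨i, hi0, hie⟩ := hex
        apply iff_of_true
        · rw [← hie, key i hi0]
          exact hi0
        · rw [← hie, gcoeffi i hi0]
          exact inv4 i hi0
      · push_neg at hex
        apply iff_of_false
        · rw [key0 e heEs hex]
          simp
        · rw [gcoeff0 e heEs hex]
          simp
  -- the main loop
  have loop : ∀ (M : ℕ) (l : ι₁ → Polynomial A) (efun : ι₁ → A),
      (∀ i, l i ∈ J) → (∀ i, IsPrimIdem (efun i)) → (∀ i, SPure σ (efun i) (l i)) →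
      (∀ i, l i ≠ 0 → (l i).coeff 0 ≠ 0) → (J ⊆ SkewSpan σ l) →
      (∑ i, (if l i = 0 then 0 else (l i).natDegree + 1)) ≤ M →
      ∃ g : Polynomial A, (∀ h : Polynomial A, h ∈ J ↔ ∃ u, h = skewMul σ u g) ∧
        (∀ e : A, IsPrimIdem e →
          (skewMul σ (Polynomial.C e) g ≠ 0 ↔ e * g.coeff 0 ≠ 0)) := by
    intro M
    induction M with
    | zero =>
      intro l efun inv1 inv2 inv3 inv4 inv5 hM
      apply final l efun inv1 inv2 inv3 inv4 inv5
      intro i j hij hi0 hj0 _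
      have h1 : (if l i = 0 then 0 else (l i).natDegree + 1) = 0 := by
        by_contra hc
        have hle : 1 ≤ if l i = 0 then 0 else (l i).natDegree + 1 := by
          rw [if_neg hi0]; omega
        have : (if l i = 0 then 0 else (l i).natDegree + 1)
            ≤ ∑ k, (if l k = 0 then 0 else (l k).natDegree + 1) :=
          Finset.single_le_sum (f := fun k => if l k = 0 then 0 else (l k).natDegree + 1)
            (fun k _ => Nat.zero_le _) (Finset.mem_univ i)
        omega
      rw [if_neg hi0] at h1
      omega
    | succ M ih =>
      intro l efun inv1 inv2 inv3 inv4 inv5 hM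
      by_cases hcol : ∃ i j, i ≠ j ∧ l i ≠ 0 ∧ l j ≠ 0 ∧ efun i = efun j
      · obtain ⟨i, j, hij, hi0, hj0, heq⟩ := hcol
        have hred : ∀ (i j : ι₁), i ≠ j → l i ≠ 0 → l j ≠ 0 → efun i = efun j →
            (l j).natDegree ≤ (l i).natDegree →
            ∃ g : Polynomial A, (∀ h : Polynomial A, h ∈ J ↔ ∃ u, h = skewMul σ u g) ∧
              (∀ e : A, IsPrimIdem e →
                (skewMul σ (Polynomial.C e) g ≠ 0 ↔ e * g.coeff 0 ≠ 0)) := by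
          clear hij hi0 hj0 heq i j
          intro i j hij hi0 hj0 heq hdeg
          have hpj : SPure σ (efun i) (l j) := by rw [heq]; exact inv3 j
          obtain ⟨c₀, hc₀1, hc₀2⟩ :=
            prim_inv (inv2 i) ((l j).coeff 0) (spure_coeff_mem σ hpj) (inv4 j hj0)
          set c : A := (l i).coeff 0 * c₀ with hc
          have hc1 : c * (l j).coeff 0 = (l i).coeff 0 := by
            calc c * (l j).coeff 0 = (l i).coeff 0 * (c₀ * (l j).coeff 0) := by ring
              _ = efun i * (l i).coeff 0 := by rw [hc₀1]; ring
              _ = (l i).coeff 0 := spure_coeff_mem σ (inv3 i)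
          have hc2 : efun i * c = c := by
            calc efun i * c = (efun i * (l i).coeff 0) * c₀ := by rw [hc]; ring
              _ = c := by rw [spure_coeff_mem σ (inv3 i)]
          set a' : Polynomial A := l i - skewMul σ (Polynomial.C c) (l j) with ha'
          have ha'J : a' ∈ J := by
            have hneg : -(skewMul σ (Polynomial.C c) (l j))
                = skewMul σ (Polynomial.C (-c)) (l j) := by
              rw [map_neg, skewMul_neg_left]
            rw [ha', sub_eq_add_neg, hneg]
            exact haddJ _ (inv1 i) _ (hmulJ _ _ (inv1 j))
          have ha'p : SPure σ (efun i) a' := spure_sub σ (inv3 i) (spure_smul σ hc2 hpj)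
          have ha'c0 : a'.coeff 0 = 0 := by
            rw [ha', Polynomial.coeff_sub, skewMul_C_left_coeff, pow_zero,
              AlgEquiv.one_apply, hc1, sub_self]
          have ha'deg : a'.natDegree ≤ (l i).natDegree := by
            apply le_trans (Polynomial.natDegree_sub_le _ _)
            exact max_le le_rfl (le_trans (skewMul_C_natDegree_le σ c (l j)) hdeg)
          obtain ⟨a'', e'', o, hJ2, hP2, hS2, hC2, hE2, hZ2, hD2, hO2⟩ :=
            norm_lemma σ J hdelay ha'J (inv2 i) ha'p
          set l' := Function.update l i a'' with hl'
          set efun' := Function.update efun i e'' with hefun'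
          have hl'i : l' i = a'' := Function.update_self i a'' l
          have hl'k : ∀ k, k ≠ i → l' k = l k := fun k hk => Function.update_of_ne hk a'' l
          have hefun'i : efun' i = e'' := Function.update_self i e'' efun
          have hefun'k : ∀ k, k ≠ i → efun' k = efun k :=
            fun k hk => Function.update_of_ne hk e'' efun
          have inv1' : ∀ k, l' k ∈ J := by
            intro k
            by_cases hk : k = i
            · rw [hk, hl'i]; exact hJ2
            · rw [hl'k k hk]; exact inv1 k
          have inv2' : ∀ k, IsPrimIdem (efun' k) := by
            intro k
            by_cases hk : k = i
            · rw [hk, hefun'i]; exact hP2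
            · rw [hefun'k k hk]; exact inv2 k
          have inv3' : ∀ k, SPure σ (efun' k) (l' k) := by
            intro k
            by_cases hk : k = i
            · rw [hk, hefun'i, hl'i]; exact hS2
            · rw [hefun'k k hk, hl'k k hk]; exact inv3 k
          have inv4' : ∀ k, l' k ≠ 0 → (l' k).coeff 0 ≠ 0 := by
            intro k
            by_cases hk : k = i
            · rw [hk, hl'i]; exact hC2
            · rw [hl'k k hk]; exact inv4 k
          have hlij : l i = skewMul σ (Polynomial.X ^ o) (l' i)
              + skewMul σ (Polynomial.C c) (l' j) := by
            rw [hl'i, hl'k j (Ne.symm hij), skewMul_X_pow_left, ← hE2, ha']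
            ring
          have inv5' : J ⊆ SkewSpan σ l' := by
            apply Set.Subset.trans inv5
            apply skewSpan_mono
            intro k
            by_cases hk : k = i
            · rw [hk, hlij]
              exact skewSpan_add σ l'
                (skewSpan_mul σ l' _ (mem_skewSpan_single σ l' i))
                (skewSpan_mul σ l' _ (mem_skewSpan_single σ l' j))
            · rw [← hl'k k hk]
              exact mem_skewSpan_single σ l' k
          apply ih l' efun' inv1' inv2' inv3' inv4' inv5'
          -- measure decrease
          have hpt : ∀ k ∈ Finset.univ (α := ι₁),
              (if l' k = 0 then 0 else (l' k).natDegree + 1)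
              ≤ (if l k = 0 then 0 else (l k).natDegree + 1) := by
            intro k _
            by_cases hk : k = i
            · subst hk
              rw [hl'i, if_neg hi0]
              by_cases ha0 : a'' = 0
              · rw [if_pos ha0]; omega
              · rw [if_neg ha0]
                have ha'0 : a' ≠ 0 := fun hh => ha0 (hZ2 hh)
                have h1 := hD2 ha'0
                have h2 := hO2 ha'c0 ha'0
                omega
            · rw [hl'k k hk]
          have hstrict : (if l' i = 0 then 0 else (l' i).natDegree + 1)
              < (if l i = 0 then 0 else (l i).natDegree + 1) := by
            rw [hl'i, if_neg hi0]
            by_cases ha0 : a'' = 0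
            · rw [if_pos ha0]; omega
            · rw [if_neg ha0]
              have ha'0 : a' ≠ 0 := fun hh => ha0 (hZ2 hh)
              have h1 := hD2 ha'0
              have h2 := hO2 ha'c0 ha'0
              omega
          have hlt : (∑ k, (if l' k = 0 then 0 else (l' k).natDegree + 1))
              < ∑ k, (if l k = 0 then 0 else (l k).natDegree + 1) :=
            Finset.sum_lt_sum hpt ⟨i, Finset.mem_univ i, hstrict⟩
          omega
        by_cases hdeg : (l j).natDegree ≤ (l i).natDegree
        · exact hred i j hij hi0 hj0 heq hdeg
        · exact hred j i (Ne.symm hij) hj0 hi0 heq.symm (le_of_not_ge hdeg)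
      · apply final l efun inv1 inv2 inv3 inv4 inv5
        intro i j hij hi0 hj0 hEq
        exact hcol ⟨i, j, hij, hi0, hj0, hEq⟩
  -- initialization
  have hinit : ∀ p : ι₁, ∃ (h' : Polynomial A) (e' : A) (o : ℕ), h' ∈ J ∧ IsPrimIdem e' ∧
      SPure σ e' h' ∧ (h' ≠ 0 → h'.coeff 0 ≠ 0) ∧
      skewMul σ (Polynomial.C (p.2.1)) (l0 p.1) = Polynomial.X ^ o * h' ∧
      (skewMul σ (Polynomial.C (p.2.1)) (l0 p.1) = 0 → h' = 0) ∧
      (skewMul σ (Polynomial.C (p.2.1)) (l0 p.1) ≠ 0 →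
        (skewMul σ (Polynomial.C (p.2.1)) (l0 p.1)).natDegree = o + h'.natDegree) ∧
      ((skewMul σ (Polynomial.C (p.2.1)) (l0 p.1)).coeff 0 = 0 →
        skewMul σ (Polynomial.C (p.2.1)) (l0 p.1) ≠ 0 → 1 ≤ o) := by
    intro p
    exact norm_lemma σ J hdelay (hmulJ _ _ (hl0J p.1)) (hEs1 _ p.2.2)
      (spure_C_mul σ _ (hEs1 _ p.2.2).1 _)
  choose l1 ef1 o1 hA hB hC hD hE hZ hG hH using hinit
  apply loop (∑ i, (if l1 i = 0 then 0 else (l1 i).natDegree + 1)) l1 ef1 hA hB hC hD _ le_rfl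
  -- inv5 for l1
  intro h hh
  obtain ⟨u, hu⟩ := hl0span hh
  rw [hu]
  apply skewSpan_sum
  intro i _
  apply skewSpan_mul
  have hdecomp : l0 i = ∑ x ∈ Es.attach, skewMul σ (Polynomial.C x.1) (l0 i) := by
    rw [Finset.sum_attach Es (fun e => skewMul σ (Polynomial.C e) (l0 i))]
    exact (spure_sum_threads σ hEs3 (l0 i)).symm
  rw [hdecomp]
  apply skewSpan_sum
  intro e _
  have : skewMul σ (Polynomial.C e.1) (l0 i) = skewMul σ (Polynomial.X ^ (o1 (i, e))) (l1 (i, e)) := by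
    rw [skewMul_X_pow_left]
    exact hE (i, e)
  rw [this]
  exact skewSpan_mul σ l1 _ (mem_skewSpan_single σ l1 (i, e))

end MLSec

section FinalSec
variable (F : Type) [Field F] [Fintype F] (n : ℕ)

theorem pId_finsum {κ : Type*} (s : Finset κ) (w : κ → (Fin n → Polynomial F)) :
    pId F n (∑ b ∈ s, w b) = ∑ b ∈ s, pId F n (w b) := by
  classical
  induction s using Finset.induction_on with
  | empty => simpa using pId_zero F n
  | insert _ _ hni ih =>
    rw [Finset.sum_insert hni, Finset.sum_insert hni, pId_add, ih]

theorem mainBridge (hn : 0 < n) (hchar : ¬ (ringChar F ∣ n))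
    (σ : Amod F n ≃ₐ[F] Amod F n)
    (D : Submodule (Polynomial F) (Fin n → Polynomial F))
    (J : Set (Polynomial (Amod F n)))
    (hJded : ∀ h : Polynomial (Amod F n), h ∈ J ↔ ∃ v ∈ D, pId F n v = h)
    (hmulJ : ∀ (f : Polynomial (Amod F n)), ∀ a ∈ J, skewMul σ f a ∈ J)
    (hdelayD : ∀ v : Fin n → Polynomial F, (Polynomial.X : Polynomial F) • v ∈ D → v ∈ D) :
    ∃ g : Polynomial (Amod F n),
      (∀ h : Polynomial (Amod F n), h ∈ J ↔ ∃ u, h = skewMul σ u g) ∧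
      (∀ e : Amod F n, IsPrimIdem e →
        (skewMul σ (Polynomial.C e) g ≠ 0 ↔ e * g.coeff 0 ≠ 0)) := by
  classical
  haveI hfin : Finite (Amod F n) := amod_finite F n hn
  haveI hred : IsReduced (Amod F n) := amod_isReduced F n hchar
  haveI hnt : Nontrivial (Amod F n) := amod_nontrivial F n hn
  have h0J : (0 : Polynomial (Amod F n)) ∈ J :=
    (hJded 0).mpr ⟨0, D.zero_mem, pId_zero F n⟩
  have haddJ : ∀ a ∈ J, ∀ b ∈ J, a + b ∈ J := by
    intro a ha b hb
    obtain ⟨v, hv, hva⟩ := (hJded a).mp ha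
    obtain ⟨w, hw, hwb⟩ := (hJded b).mp hb
    exact (hJded _).mpr ⟨v + w, D.add_mem hv hw, by rw [pId_add, hva, hwb]⟩
  have hdelayJ : ∀ a : Polynomial (Amod F n), Polynomial.X * a ∈ J → a ∈ J := by
    intro a ha
    obtain ⟨v, hv⟩ := pId_surjective F n hn a
    obtain ⟨w, hw, hwa⟩ := (hJded _).mp ha
    have hXv : pId F n ((Polynomial.X : Polynomial F) • v) = Polynomial.X * a := by
      rw [pId_smul, Polynomial.map_X, hv]
    have hweq : w = (Polynomial.X : Polynomial F) • v :=
      pId_injective F n hn (by rw [hwa, hXv])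
    have : (Polynomial.X : Polynomial F) • v ∈ D := hweq ▸ hw
    exact (hJded a).mpr ⟨v, hdelayD v this, hv⟩
  -- finite generation
  have hDfg : D.FG := IsNoetherian.noetherian D
  obtain ⟨S, hS⟩ := hDfg
  have hSsub : (S : Set (Fin n → Polynomial F)) ⊆ D := by
    rw [← hS]
    exact Submodule.subset_span
  set l0 : {x // x ∈ S} → Polynomial (Amod F n) := fun b => pId F n b.1 with hl0
  have hl0J : ∀ b : {x // x ∈ S}, l0 b ∈ J :=
    fun b => (hJded _).mpr ⟨b.1, hSsub b.2, rfl⟩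
  have hl0span : J ⊆ SkewSpan σ l0 := by
    intro h hh
    obtain ⟨v, hv, hvh⟩ := (hJded h).mp hh
    have hvmem : v ∈ Submodule.span (Polynomial F) (S : Set (Fin n → Polynomial F)) := by
      rw [hS]; exact hv
    obtain ⟨f, -, hf⟩ := Submodule.mem_span_finset.mp hvmem
    refine ⟨fun b => (f b.1).map (algebraMap F (Amod F n)), ?_⟩
    rw [← hvh, ← hf, pId_finsum]
    rw [← Finset.sum_coe_sort S (fun b => pId F n (f b • b))]
    apply Finset.sum_congr rfl
    intro b _
    rw [pId_smul, ← skewMul_map_left]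
  exact masterLemma σ J h0J haddJ hmulJ hdelayJ {x // x ∈ S} l0 hl0J hl0span

end FinalSec

theorem stmt_8' (F : Type) [Field F] [Fintype F] (n : ℕ) (hn : 0 < n)
    (hchar : ¬ (ringChar F ∣ n))
    (σ : Amod F n ≃ₐ[F] Amod F n)
    (C : Submodule (Polynomial F) (Fin n → Polynomial F)) :
    (((∀ (f : Polynomial (Amod F n)) (v : Fin n → Polynomial F), v ∈ C →
          ∃ w ∈ C, pId F n w = skewMul σ f (pId F n v)) ∧
        (∀ v : Fin n → Polynomial F, (Polynomial.X : Polynomial F) • v ∈ C → v ∈ C)) ↔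
      (∃ g : Polynomial (Amod F n),
        (∀ v : Fin n → Polynomial F, v ∈ C ↔ ∃ u, pId F n v = skewMul σ u g) ∧
        (∀ e : Amod F n, IsPrimIdem e →
          (skewMul σ (Polynomial.C e) g ≠ 0 ↔ e * g.coeff 0 ≠ 0)))) ∧
    (∀ J : Set (Polynomial (Amod F n)),
        (0 : Polynomial (Amod F n)) ∈ J →
        (∀ a ∈ J, ∀ b ∈ J, a + b ∈ J) →
        (∀ (f : Polynomial (Amod F n)), ∀ a ∈ J, skewMul σ f a ∈ J) →
        (∀ (k : ℕ) (a : Polynomial (Amod F n)),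
            skewMul σ (Polynomial.X ^ k) a ∈ J → a ∈ J) →
        ∃ g : Polynomial (Amod F n), J = {f | ∃ u, f = skewMul σ u g}) := by
  classical
  haveI hfin : Finite (Amod F n) := amod_finite F n hn
  haveI hred : IsReduced (Amod F n) := amod_isReduced F n hchar
  haveI hnt : Nontrivial (Amod F n) := amod_nontrivial F n hn
  constructor
  · constructor
    · rintro ⟨hcyc, hdf⟩
      set J : Set (Polynomial (Amod F n)) := {h | ∃ v ∈ C, pId F n v = h} with hJ
      have hJded : ∀ h, h ∈ J ↔ ∃ v ∈ C, pId F n v = h := fun h => Iff.rfl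
      have hmulJ : ∀ (f : Polynomial (Amod F n)), ∀ a ∈ J, skewMul σ f a ∈ J := by
        rintro f a ⟨v, hv, rfl⟩
        obtain ⟨w, hw, hww⟩ := hcyc f v hv
        exact ⟨w, hw, hww⟩
      obtain ⟨g, hgiff, hgsupp⟩ := mainBridge F n hn hchar σ C J hJded hmulJ hdf
      refine ⟨g, ?_, hgsupp⟩
      intro v
      constructor
      · intro hv
        exact (hgiff (pId F n v)).mp ⟨v, hv, rfl⟩
      · rintro ⟨u, hu⟩
        obtain ⟨w, hw, hww⟩ := (hgiff (pId F n v)).mpr ⟨u, hu⟩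
        exact (pId_injective F n hn hww) ▸ hw
    · rintro ⟨g, hgiff, hgsupp⟩
      obtain ⟨Es, hEs1, hEs2, hEs3⟩ := exists_prim_partition (A := Amod F n)
      constructor
      · intro f v hv
        obtain ⟨u, hu⟩ := (hgiff v).mp hv
        obtain ⟨w, hw⟩ := pId_surjective F n hn (skewMul σ (skewMul σ f u) g)
        refine ⟨w, (hgiff w).mpr ⟨skewMul σ f u, hw⟩, ?_⟩
        rw [hw, hu, skewMul_assoc]
      · intro v hXv
        obtain ⟨u, hu⟩ := (hgiff _).mp hXv
        have hXpid : pId F n ((Polynomial.X : Polynomial F) • v)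
            = Polynomial.X * pId F n v := by
          rw [pId_smul, Polynomial.map_X]
        have h00 : (u.coeff 0) * g.coeff 0 = 0 := by
          have h1 : (skewMul σ u g).coeff 0 = u.coeff 0 * g.coeff 0 := by
            rw [skewMul_coeff, Finset.Nat.antidiagonal_zero, Finset.sum_singleton, pow_zero,
              AlgEquiv.one_apply]
          have h2 : (Polynomial.X * pId F n v).coeff 0 = 0 := by
            rw [Polynomial.mul_coeff_zero, Polynomial.coeff_X_zero, zero_mul]
          rw [← h1, ← hu, hXpid, h2]
        have hCu0 : skewMul σ (Polynomial.C (u.coeff 0)) g = 0 := by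
          ext ν
          rw [skewMul_C_left_coeff, Polynomial.coeff_zero]
          have hterm : ∀ e' ∈ Es, (σ ^ ν) e' * ((σ ^ ν) (u.coeff 0) * g.coeff ν) = 0 := by
            intro e' he'
            by_cases hcase : e' * g.coeff 0 = 0
            · have hCe' : skewMul σ (Polynomial.C e') g = 0 := by
                by_contra hne
                exact ((hgsupp e' (hEs1 e' he')).mp hne) hcase
              have hco : (σ ^ ν) e' * g.coeff ν = 0 := by
                have hcc := congrArg (fun p => Polynomial.coeff p ν) hCe'
                simp only [skewMul_C_left_coeff, Polynomial.coeff_zero] at hcc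
                exact hcc
              calc (σ ^ ν) e' * ((σ ^ ν) (u.coeff 0) * g.coeff ν)
                  = (σ ^ ν) (u.coeff 0) * ((σ ^ ν) e' * g.coeff ν) := by ring
                _ = 0 := by rw [hco, mul_zero]
            · have he'u : e' * u.coeff 0 = 0 := by
                obtain ⟨c, hc1, hc2⟩ := prim_inv (hEs1 e' he') (e' * g.coeff 0)
                  (by rw [← mul_assoc, (hEs1 e' he').1]) hcase
                calc e' * u.coeff 0 = (c * (e' * g.coeff 0)) * u.coeff 0 := by rw [hc1]
                  _ = (c * e') * (u.coeff 0 * g.coeff 0) := by ring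
                  _ = 0 := by rw [h00, mul_zero]
              rw [← mul_assoc, ← map_mul, he'u, map_zero, zero_mul]
          have hone : (1 : Amod F n) * ((σ ^ ν) (u.coeff 0) * g.coeff ν)
              = (σ ^ ν) (u.coeff 0) * g.coeff ν := one_mul _
          rw [← hone, ← map_one (σ ^ ν), ← hEs3, map_sum, Finset.sum_mul]
          exact Finset.sum_eq_zero hterm
        have hsplit : skewMul σ u g = skewMul σ (u - Polynomial.C (u.coeff 0)) g := by
          have hh : u = (u - Polynomial.C (u.coeff 0)) + Polynomial.C (u.coeff 0) := by ring
          conv_lhs => rw [hh]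
          rw [skewMul_add_left, hCu0, add_zero]
        have hdvd : Polynomial.X ∣ (u - Polynomial.C (u.coeff 0)) :=
          Polynomial.X_dvd_iff.mpr
            (by rw [Polynomial.coeff_sub, Polynomial.coeff_C_zero, sub_self])
        obtain ⟨u', hu'⟩ := hdvd
        have hXX : Polynomial.X * pId F n v = Polynomial.X * skewMul σ u' g := by
          rw [← hXpid, hu, hsplit, hu', ← skewMul_X_left σ u', ← skewMul_assoc,
            skewMul_X_left]
        have hcancel : pId F n v = skewMul σ u' g := by
          ext k
          have hck := congrArg (fun p => Polynomial.coeff p (k + 1)) hXX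
          simpa [Polynomial.coeff_X_mul] using hck
        exact (hgiff v).mpr ⟨u', hcancel⟩
  · intro J h0 hadd hmul hdelay
    set D : Submodule (Polynomial F) (Fin n → Polynomial F) :=
      { carrier := {v | pId F n v ∈ J},
        add_mem' := fun {a b} ha hb => by
          show pId F n (a + b) ∈ J
          rw [pId_add]
          exact hadd _ ha _ hb,
        zero_mem' := by
          show pId F n 0 ∈ J
          rw [pId_zero]
          exact h0,
        smul_mem' := fun p v hv => by
          show pId F n (p • v) ∈ J
          rw [pId_smul, ← skewMul_map_left]
          exact hmul _ _ hv } with hD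
    have hJded : ∀ h, h ∈ J ↔ ∃ v ∈ D, pId F n v = h := by
      intro h
      constructor
      · intro hh
        obtain ⟨v, hv⟩ := pId_surjective F n hn h
        exact ⟨v, by show pId F n v ∈ J; rw [hv]; exact hh, hv⟩
      · rintro ⟨v, hv, rfl⟩
        exact hv
    have hdelayD : ∀ v : Fin n → Polynomial F,
        (Polynomial.X : Polynomial F) • v ∈ D → v ∈ D := by
      intro v hv
      show pId F n v ∈ J
      apply hdelay 1
      rw [skewMul_X_pow_left, pow_one]
      have : pId F n ((Polynomial.X : Polynomial F) • v) ∈ J := hv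
      rwa [pId_smul, Polynomial.map_X] at this
    obtain ⟨g, hgiff, _⟩ := mainBridge F n hn hchar σ D J hJded hmul hdelayD
    exact ⟨g, Set.ext fun h => hgiff h⟩


/-- C ⊆ F[z]^n is σ-cyclic and delay-free iff p(C) is the principal left
ideal of R = A[z;σ] generated by a polynomial g whose support equals the support of its
z-free term.  In particular every delay-free left ideal of R is a principal left ideal. -/
theorem stmt_8 (F : Type) [Field F] [Fintype F] (n : ℕ) (hn : 0 < n)
    (hchar : ¬ (ringChar F ∣ n))
    (σ : Amod F n ≃ₐ[F] Amod F n)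
    (C : Submodule (Polynomial F) (Fin n → Polynomial F)) :
    (((∀ (f : Polynomial (Amod F n)) (v : Fin n → Polynomial F), v ∈ C →
          ∃ w ∈ C, pId F n w = skewMul σ f (pId F n v)) ∧
        (∀ v : Fin n → Polynomial F, (Polynomial.X : Polynomial F) • v ∈ C → v ∈ C)) ↔
      (∃ g : Polynomial (Amod F n),
        (∀ v : Fin n → Polynomial F, v ∈ C ↔ ∃ u, pId F n v = skewMul σ u g) ∧
        (∀ e : Amod F n, IsPrimIdem e →
          (skewMul σ (Polynomial.C e) g ≠ 0 ↔ e * g.coeff 0 ≠ 0)))) ∧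
    (∀ J : Set (Polynomial (Amod F n)),
        (0 : Polynomial (Amod F n)) ∈ J →
        (∀ a ∈ J, ∀ b ∈ J, a + b ∈ J) →
        (∀ (f : Polynomial (Amod F n)), ∀ a ∈ J, skewMul σ f a ∈ J) →
        (∀ (k : ℕ) (a : Polynomial (Amod F n)),
            skewMul σ (Polynomial.X ^ k) a ∈ J → a ∈ J) →
        ∃ g : Polynomial (Amod F n), J = {f | ∃ u, f = skewMul σ u g}) :=
  stmt_8' F n hn hchar σ C
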